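/- Let B₂ be a finite set and m ≥ 1. Define shift, shiftt : (B₂×B₂)^m → (B₂×B₂)^m on pairs of words (u, v) with u, v ∈ B₂^m by shift(u,v) = (u_1 u_2 ⋯ u_{m−1} u_0, v_1 v_2 ⋯ v_{m−1} v_0) and shiftt(u,v) = (u_1 u_2 ⋯ u_{m−1} v_0, v_1 v_2 ⋯ v_{m−1} u_0). For m = 2n define φ : (B₂×B₂)^{2n} → (B₂×B₂)^{2n} by φ(u_0 ⋯ u_{2n−1}, v_0 ⋯ v_{2n−1}) = (u_0 v_0 u_1 v_1 ⋯ u_{n−1} v_{n−1}, u_n v_n u_{n+1} v_{n+1} ⋯ u_{2n−1} v_{2n−1}). Then φ is a bijection and shift = φ^{−1} ∘ shiftt² ∘ φ on (B₂×B₂)^{2n}. -/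

import Mathlib

section

variable {B₂ : Type*}

/-- `shift` on two parallel tracks of length `m`:
`shift(u,v) = (u_1 ⋯ u_{m−1} u_0, v_1 ⋯ v_{m−1} v_0)`. -/
def shiftW (m : ℕ) (p : (Fin m → B₂) × (Fin m → B₂)) : (Fin m → B₂) × (Fin m → B₂) :=
  (fun i => if h : (i : ℕ) + 1 < m then p.1 ⟨(i : ℕ) + 1, h⟩ else p.1 ⟨0, by omega⟩,
   fun i => if h : (i : ℕ) + 1 < m then p.2 ⟨(i : ℕ) + 1, h⟩ else p.2 ⟨0, by omega⟩)

/-- `shiftt` on two parallel tracks of length `m` (the Möbius variant):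
`shiftt(u,v) = (u_1 ⋯ u_{m−1} v_0, v_1 ⋯ v_{m−1} u_0)`. -/
def shifttW (m : ℕ) (p : (Fin m → B₂) × (Fin m → B₂)) : (Fin m → B₂) × (Fin m → B₂) :=
  (fun i => if h : (i : ℕ) + 1 < m then p.1 ⟨(i : ℕ) + 1, h⟩ else p.2 ⟨0, by omega⟩,
   fun i => if h : (i : ℕ) + 1 < m then p.2 ⟨(i : ℕ) + 1, h⟩ else p.1 ⟨0, by omega⟩)

/-- For `m = 2n`, the rearranging map
`φ(u_0 ⋯ u_{2n−1}, v_0 ⋯ v_{2n−1}) = (u_0 v_0 u_1 v_1 ⋯ u_{n−1} v_{n−1},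
u_n v_n u_{n+1} v_{n+1} ⋯ u_{2n−1} v_{2n−1})`. -/
def phiW (n : ℕ) (p : (Fin (2 * n) → B₂) × (Fin (2 * n) → B₂)) :
    (Fin (2 * n) → B₂) × (Fin (2 * n) → B₂) :=
  (fun i => if (i : ℕ) % 2 = 0
      then p.1 ⟨(i : ℕ) / 2, by have := i.isLt; omega⟩
      else p.2 ⟨(i : ℕ) / 2, by have := i.isLt; omega⟩,
   fun i => if (i : ℕ) % 2 = 0
      then p.1 ⟨n + (i : ℕ) / 2, by have := i.isLt; omega⟩
      else p.2 ⟨n + (i : ℕ) / 2, by have := i.isLt; omega⟩)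

end

/-- Explicit inverse of `phiW`. -/
def psiW {B₂ : Type*} (n : ℕ) (q : (Fin (2 * n) → B₂) × (Fin (2 * n) → B₂)) :
    (Fin (2 * n) → B₂) × (Fin (2 * n) → B₂) :=
  (fun i => if h : (i : ℕ) < n then q.1 ⟨2 * (i : ℕ), by omega⟩
      else q.2 ⟨2 * ((i : ℕ) - n), by have := i.isLt; omega⟩,
   fun i => if h : (i : ℕ) < n then q.1 ⟨2 * (i : ℕ) + 1, by omega⟩
      else q.2 ⟨2 * ((i : ℕ) - n) + 1, by have := i.isLt; omega⟩)

/-- For a finite set `B₂` and `m = 2n ≥ 2`: `φ` is a bijection of `(B₂×B₂)^{2n}` and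
`shift = φ⁻¹ ∘ shiftt² ∘ φ`, i.e. `φ ∘ shift = shiftt² ∘ φ` on `(B₂×B₂)^{2n}`. -/
theorem phiW_conjugates_shift_to_shiftt_sq {B₂ : Type*} [Fintype B₂]
    (n : ℕ) (hn : 1 ≤ n) :
    Function.Bijective (phiW (B₂ := B₂) n) ∧
      ∀ p : (Fin (2 * n) → B₂) × (Fin (2 * n) → B₂),
        phiW n (shiftW (2 * n) p) = shifttW (2 * n) (shifttW (2 * n) (phiW n p)) := by
  constructor
  · apply Function.bijective_iff_has_inverse.mpr
    refine ⟨psiW n, fun p => ?_, fun q => ?_⟩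
    · ext i <;> have hi := i.isLt <;>
        simp only [psiW, phiW] <;>
        split_ifs <;>
        simp -failIfUnchanged only [Fin.val_mk] at * <;>
        first
          | exact congrArg _ (Fin.ext (by simp only [Fin.val_mk]; omega))
          | omega
    · ext i <;> have hi := i.isLt <;>
        simp only [psiW, phiW] <;>
        split_ifs <;>
        simp -failIfUnchanged only [Fin.val_mk] at * <;>
        first
          | exact congrArg _ (Fin.ext (by simp only [Fin.val_mk]; omega))
          | omega
  · intro p
    ext i <;> have hi := i.isLt <;>
      simp only [phiW, shiftW, shifttW] <;>
      split_ifs <;>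
      simp -failIfUnchanged only [Fin.val_mk] at * <;>
      first
        | exact congrArg _ (Fin.ext (by simp only [Fin.val_mk]; omega))
        | omega
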